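/- arXiv:1501.02356 — 11 statements merged into one kernel-verified Lean document; each statement's English description precedes it below -/
import Mathlib

section
/- For t ∈ [-1,1], t ≠ 0, the functions K_t(x,y) = t·x^t·(x-y)/(x^t - y^t) and L_t(x,y) = t·y^t·(x-y)/(x^t - y^t) (extended by K_t(x,x) = L_t(x,x) = x) satisfy the invariance equation L(K_t(x,y), L_t(x,y)) = L(x,y) for all x, y > 0, where L is the logarithmic mean. -/
noncomputable def logMean (x y : ℝ) : ℝ :=
  if x = y then x else (x - y) / (Real.log x - Real.log y)

theorem L_invariance (t : ℝ) (ht : t ∈ Set.Icc (-1 : ℝ) 1) (ht0 : t ≠ 0)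
    (K L : ℝ → ℝ → ℝ)
    (hK : ∀ x y : ℝ, K x y = if x = y then x else t * x ^ t * (x - y) / (x ^ t - y ^ t))
    (hL : ∀ x y : ℝ, L x y = if x = y then x else t * y ^ t * (x - y) / (x ^ t - y ^ t))
    (x y : ℝ) (hx : 0 < x) (hy : 0 < y) :
    logMean (K x y) (L x y) = logMean x y := by
  by_cases hxy : x = y
  · subst hxy
    simp [hK, hL, logMean]
  · have hd : x ^ t ≠ y ^ t := by
      intro h
      apply hxy
      have := congrArg (fun z : ℝ => z ^ t⁻¹) h
      simpa [Real.rpow_rpow_inv hx.le ht0, Real.rpow_rpow_inv hy.le ht0] using this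
    set c : ℝ := t * (x - y) / (x ^ t - y ^ t) with hcdef
    have hc : 0 < c := by
      rcases ht0.lt_or_gt with htn | htp
      · rcases Ne.lt_or_gt hxy with h | h
        · exact div_pos (mul_pos_of_neg_of_neg htn (by linarith))
            (sub_pos.mpr (Real.rpow_lt_rpow_of_neg hx h htn))
        · exact div_pos_of_neg_of_neg (mul_neg_of_neg_of_pos htn (by linarith))
            (sub_neg.mpr (Real.rpow_lt_rpow_of_neg hy h htn))
      · rcases Ne.lt_or_gt hxy with h | h
        · exact div_pos_of_neg_of_neg (mul_neg_of_pos_of_neg htp (by linarith))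
            (sub_neg.mpr (Real.rpow_lt_rpow hx.le h htp))
        · exact div_pos (mul_pos htp (by linarith))
            (sub_pos.mpr (Real.rpow_lt_rpow hy.le h htp))
    have hKv : K x y = x ^ t * c := by
      rw [hK, if_neg hxy, hcdef]; ring
    have hLv : L x y = y ^ t * c := by
      rw [hL, if_neg hxy, hcdef]; ring
    have hKL : K x y ≠ L x y := by
      rw [hKv, hLv]
      intro h
      exact hd (mul_right_cancel₀ hc.ne' h)
    have hxt : (0:ℝ) < x ^ t := Real.rpow_pos_of_pos hx t
    have hyt : (0:ℝ) < y ^ t := Real.rpow_pos_of_pos hy t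
    have key : c * (x ^ t - y ^ t) = t * (x - y) := by
      rw [hcdef, div_mul_cancel₀ _ (sub_ne_zero.mpr hd)]
    unfold logMean
    rw [if_neg hKL, if_neg hxy, hKv, hLv,
      Real.log_mul hxt.ne' hc.ne', Real.log_mul hyt.ne' hc.ne',
      Real.log_rpow hx, Real.log_rpow hy]
    have hnum : x ^ t * c - y ^ t * c = t * (x - y) := by rw [← key]; ring
    have hden : t * Real.log x + Real.log c - (t * Real.log y + Real.log c)
        = t * (Real.log x - Real.log y) := by ring
    rw [hnum, hden, mul_div_mul_left _ _ ht0]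
end

section
/- For t ∈ (0,1] and x, y > 0 with x ≠ y, the value K_t(x,y) = t·x^t·(x-y)/(x^t - y^t) lies between min(x,y) and max(x,y); i.e., K_t is a mean on the positive reals. -/
theorem Kt_is_mean (t : ℝ) (ht : t ∈ Set.Ioc (0 : ℝ) 1)
    (x y : ℝ) (hx : 0 < x) (hy : 0 < y) (hxy : x ≠ y) :
    min x y ≤ t * x ^ t * (x - y) / (x ^ t - y ^ t) ∧
      t * x ^ t * (x - y) / (x ^ t - y ^ t) ≤ max x y := by
  obtain ⟨ht0, ht1⟩ := ht
  set s : ℝ := y / x with hs_def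
  have hs : 0 < s := div_pos hy hx
  have hyx : y = s * x := by rw [hs_def, div_mul_cancel₀ y hx.ne']
  have hxt : (0:ℝ) < x ^ t := Real.rpow_pos_of_pos hx t
  have hst : y ^ t = s ^ t * x ^ t := by
    rw [hyx, Real.mul_rpow hs.le hx.le]
  have hstpos : (0:ℝ) < s ^ t := Real.rpow_pos_of_pos hs t
  -- Bernoulli inequalities
  have bern1 : 1 + (t + 1) * (s - 1) ≤ s ^ t * s := by
    have h := one_add_mul_self_le_rpow_one_add (s := s - 1) (by linarith) (p := t + 1)
      (by linarith)
    have h2 : (1 + (s - 1)) ^ (t + 1) = s ^ t * s := by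
      rw [show 1 + (s - 1) = s by ring, Real.rpow_add hs, Real.rpow_one]
    linarith [h2 ▸ h]
  have bern2 : s ^ t ≤ 1 + t * (s - 1) := by
    have h := rpow_one_add_le_one_add_mul_self (s := s - 1) (by linarith) (p := t)
      ht0.le ht1
    have h2 : (1 + (s - 1)) ^ t = s ^ t := by
      rw [show 1 + (s - 1) = s by ring]
    linarith [h2 ▸ h]
  -- key polynomial inequalities
  have key1 : t * x ^ t * (x - y) ≤ x * (x ^ t - y ^ t) := by
    rw [hst, hyx]
    nlinarith [mul_pos hxt hx, mul_le_mul_of_nonneg_left bern2 (mul_pos hxt hx).le]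
  have key2 : y * (x ^ t - y ^ t) ≤ t * x ^ t * (x - y) := by
    rw [hst, hyx]
    nlinarith [mul_pos hxt hx, mul_le_mul_of_nonneg_left bern1 (mul_pos hxt hx).le]
  rcases lt_or_gt_of_ne hxy with hlt | hgt
  · -- x < y, so denominator negative, min = x, max = y
    have hd : x ^ t - y ^ t < 0 := by
      have := Real.rpow_lt_rpow hx.le hlt ht0
      linarith
    have hmin : min x y = x := min_eq_left hlt.le
    have hmax : max x y = y := max_eq_right hlt.le
    rw [hmin, hmax]
    constructor
    · rw [le_div_iff_of_neg hd]
      linarith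
    · rw [div_le_iff_of_neg hd]
      linarith
  · -- y < x, denominator positive, min = y, max = x
    have hd : 0 < x ^ t - y ^ t := by
      have := Real.rpow_lt_rpow hy.le hgt ht0
      linarith
    have hmin : min x y = y := min_eq_right hgt.le
    have hmax : max x y = x := max_eq_left hgt.le
    rw [hmin, hmax]
    constructor
    · rw [le_div_iff₀ hd]
      linarith
    · rw [div_le_iff₀ hd]
      linarith
end

section
/- Let M : ℝ₊² → ℝ₊ be a homogeneous, symmetric, monotone mean. Then for every t ∈ (-1,1), the function M_t(x,y) = (M(x,y)/M(x^t,y^t))^{1/(1-t)} is a mean, i.e., min(x,y) ≤ M_t(x,y) ≤ max(x,y) for all x, y > 0. -/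
private lemma Mt_key (M : ℝ → ℝ → ℝ)
    (hmean : ∀ x y : ℝ, 0 < x → 0 < y → min x y ≤ M x y ∧ M x y ≤ max x y)
    (hhom : ∀ l x y : ℝ, 0 < l → 0 < x → 0 < y → M (l * x) (l * y) = l * M x y)
    (hmono : ∀ x₁ y₁ x₂ y₂ : ℝ, 0 < x₁ → 0 < y₁ → x₁ ≤ x₂ → y₁ ≤ y₂ → M x₁ y₁ ≤ M x₂ y₂)
    (t : ℝ) (ht1 : t < 1) (x y : ℝ) (hx : 0 < x) (hy : 0 < y) (hxy : x ≤ y) :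
    x ≤ (M x y / M (x ^ t) (y ^ t)) ^ (1 / (1 - t)) ∧
      (M x y / M (x ^ t) (y ^ t)) ^ (1 / (1 - t)) ≤ y := by
  have hs : (0:ℝ) < 1 - t := by linarith
  have hxt : (0:ℝ) < x ^ t := Real.rpow_pos_of_pos hx t
  have hyt : (0:ℝ) < y ^ t := Real.rpow_pos_of_pos hy t
  have hxs : (0:ℝ) < x ^ (1 - t) := Real.rpow_pos_of_pos hx (1 - t)
  have hys : (0:ℝ) < y ^ (1 - t) := Real.rpow_pos_of_pos hy (1 - t)
  have hxsys : x ^ (1 - t) ≤ y ^ (1 - t) :=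
    Real.rpow_le_rpow hx.le hxy hs.le
  have hb : 0 < M (x ^ t) (y ^ t) := by
    have := (hmean _ _ hxt hyt).1
    calc (0:ℝ) < min (x ^ t) (y ^ t) := lt_min hxt hyt
      _ ≤ _ := this
  -- combine: x^(1-t) * x^t = x, y^(1-t) * y^t = y
  have hxx : x ^ (1 - t) * x ^ t = x := by
    rw [← Real.rpow_add hx]; norm_num
  have hyy : y ^ (1 - t) * y ^ t = y := by
    rw [← Real.rpow_add hy]; norm_num
  -- upper bound: M x y ≤ y^(1-t) * M (x^t) (y^t)
  have hup : M x y ≤ y ^ (1 - t) * M (x ^ t) (y ^ t) := by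
    rw [← hhom _ _ _ hys hxt hyt]
    have h1 : x ≤ y ^ (1 - t) * x ^ t := by
      calc x = x ^ (1 - t) * x ^ t := hxx.symm
        _ ≤ y ^ (1 - t) * x ^ t := by
            exact mul_le_mul_of_nonneg_right hxsys hxt.le
    have h2 : y ≤ y ^ (1 - t) * y ^ t := le_of_eq hyy.symm
    exact hmono _ _ _ _ hx hy h1 h2
  -- lower bound: x^(1-t) * M (x^t) (y^t) ≤ M x y
  have hlo : x ^ (1 - t) * M (x ^ t) (y ^ t) ≤ M x y := by
    rw [← hhom _ _ _ hxs hxt hyt]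
    have h1 : x ^ (1 - t) * x ^ t ≤ x := le_of_eq hxx
    have h2 : x ^ (1 - t) * y ^ t ≤ y := by
      calc x ^ (1 - t) * y ^ t ≤ y ^ (1 - t) * y ^ t :=
            mul_le_mul_of_nonneg_right hxsys hyt.le
        _ = y := hyy
    exact hmono _ _ _ _ (mul_pos hxs hxt) (mul_pos hxs hyt) h1 h2
  have hdiv1 : x ^ (1 - t) ≤ M x y / M (x ^ t) (y ^ t) :=
    (le_div_iff₀ hb).mpr hlo
  have hdiv2 : M x y / M (x ^ t) (y ^ t) ≤ y ^ (1 - t) :=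
    (div_le_iff₀ hb).mpr (by linarith [hup])
  have hexp : (0:ℝ) ≤ 1 / (1 - t) := by positivity
  have hcollapse : ∀ z : ℝ, 0 < z → (z ^ (1 - t)) ^ (1 / (1 - t)) = z := by
    intro z hz
    rw [← Real.rpow_mul hz.le, mul_one_div, div_self hs.ne', Real.rpow_one]
  constructor
  · calc x = (x ^ (1 - t)) ^ (1 / (1 - t)) := (hcollapse x hx).symm
      _ ≤ _ := Real.rpow_le_rpow hxs.le hdiv1 hexp
  · calc (M x y / M (x ^ t) (y ^ t)) ^ (1 / (1 - t))
        ≤ (y ^ (1 - t)) ^ (1 / (1 - t)) :=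
          Real.rpow_le_rpow (le_trans hxs.le hdiv1) hdiv2 hexp
      _ = y := hcollapse y hy

theorem Mt_is_mean (M : ℝ → ℝ → ℝ)
    (hmean : ∀ x y : ℝ, 0 < x → 0 < y → min x y ≤ M x y ∧ M x y ≤ max x y)
    (hhom : ∀ l x y : ℝ, 0 < l → 0 < x → 0 < y → M (l * x) (l * y) = l * M x y)
    (hsym : ∀ x y : ℝ, 0 < x → 0 < y → M x y = M y x)
    (hmono : ∀ x₁ y₁ x₂ y₂ : ℝ, 0 < x₁ → 0 < y₁ → x₁ ≤ x₂ → y₁ ≤ y₂ → M x₁ y₁ ≤ M x₂ y₂)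
    (t : ℝ) (ht : t ∈ Set.Ioo (-1 : ℝ) 1) (x y : ℝ) (hx : 0 < x) (hy : 0 < y) :
    min x y ≤ (M x y / M (x ^ t) (y ^ t)) ^ (1 / (1 - t)) ∧
      (M x y / M (x ^ t) (y ^ t)) ^ (1 / (1 - t)) ≤ max x y := by
  obtain ⟨-, ht1⟩ := ht
  rcases le_total x y with hxy | hxy
  · rw [min_eq_left hxy, max_eq_right hxy]
    exact Mt_key M hmean hhom hmono t ht1 x y hx hy hxy
  · rw [min_eq_right hxy, max_eq_left hxy]
    have hxt : (0:ℝ) < x ^ t := Real.rpow_pos_of_pos hx t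
    have hyt : (0:ℝ) < y ^ t := Real.rpow_pos_of_pos hy t
    rw [hsym x y hx hy, hsym (x ^ t) (y ^ t) hxt hyt]
    exact Mt_key M (fun a b ha hb => by
        rw [hsym a b ha hb, min_comm, max_comm]; exact hmean b a hb ha)
      (fun l a b hl ha hb => by
        rw [hsym (l*a) (l*b) (mul_pos hl ha) (mul_pos hl hb), hhom l b a hl hb ha,
          hsym a b ha hb])
      (fun a b c d ha hb hac hbd => by
        rw [hsym a b ha hb, hsym c d (ha.trans_le hac) (hb.trans_le hbd)]
        exact hmono b a d c hb ha hbd hac)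
      t ht1 y x hy hx hxy
end

section
/- Let M : ℝ₊² → ℝ₊ be a homogeneous, symmetric mean such that for every t ∈ (-1,1) the function M_t(x,y) = (M(x,y)/M(x^t,y^t))^{1/(1-t)} is a mean. Then M is monotone, i.e., nondecreasing in each variable. -/
theorem Mt_mean_implies_monotone (M : ℝ → ℝ → ℝ)
    (hmean : ∀ x y : ℝ, 0 < x → 0 < y → min x y ≤ M x y ∧ M x y ≤ max x y)
    (hhom : ∀ l x y : ℝ, 0 < l → 0 < x → 0 < y → M (l * x) (l * y) = l * M x y)
    (hsym : ∀ x y : ℝ, 0 < x → 0 < y → M x y = M y x)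
    (hMt : ∀ t ∈ Set.Ioo (-1 : ℝ) 1, ∀ x y : ℝ, 0 < x → 0 < y →
      min x y ≤ (M x y / M (x ^ t) (y ^ t)) ^ (1 / (1 - t)) ∧
        (M x y / M (x ^ t) (y ^ t)) ^ (1 / (1 - t)) ≤ max x y) :
    ∀ x₁ y₁ x₂ y₂ : ℝ, 0 < x₁ → 0 < y₁ → x₁ ≤ x₂ → y₁ ≤ y₂ → M x₁ y₁ ≤ M x₂ y₂ := by
  have hfpos : ∀ a : ℝ, 0 < a → 0 < M a 1 := fun a ha =>
    lt_of_lt_of_le (lt_min ha one_pos) (hmean a 1 ha one_pos).1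
  -- key: s ↦ M s 1 is monotone
  have fmono : ∀ a b : ℝ, 0 < a → a ≤ b → M a 1 ≤ M b 1 := by
    intro a b ha hab
    rcases eq_or_lt_of_le hab with rfl | hab
    · exact le_refl _
    have hb : 0 < b := ha.trans hab
    by_cases hb1 : b ≤ 1
    · -- a < b ≤ 1
      have ha1 : a < 1 := hab.trans_le hb1
      set t : ℝ := Real.logb a b with htdef
      have hla : Real.log a < 0 := Real.log_neg ha ha1
      have hlab : Real.log a < Real.log b := Real.log_lt_log ha hab
      have ht0 : 0 ≤ t := by
        have h := div_nonneg (neg_nonneg.mpr (Real.log_nonpos hb.le hb1))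
          (neg_nonneg.mpr hla.le)
        rwa [neg_div_neg_eq] at h
      have ht1 : t < 1 := by
        rw [htdef, Real.logb, div_lt_one_iff]
        exact Or.inr (Or.inr ⟨hla, hlab⟩)
      have hat : a ^ t = b := Real.rpow_logb ha ha1.ne hb
      have := (hMt t ⟨lt_of_lt_of_le (by norm_num) ht0, ht1⟩ a 1 ha one_pos).2
      rw [Real.one_rpow, hat, max_eq_right ha1.le] at this
      have he : 0 < 1 / (1 - t) := div_pos one_pos (by linarith)
      have hbase : 0 < M a 1 / M b 1 := div_pos (hfpos a ha) (hfpos b hb)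
      have hle1 : M a 1 / M b 1 ≤ 1 := by
        by_contra h
        push_neg at h
        exact absurd this (not_le.mpr (Real.one_lt_rpow h he))
      exact (div_le_one (hfpos b hb)).mp hle1
    · push_neg at hb1
      by_cases ha1 : a ≤ 1
      · -- a ≤ 1 < b
        calc M a 1 ≤ max a 1 := (hmean a 1 ha one_pos).2
          _ = 1 := max_eq_right ha1
          _ = min b 1 := (min_eq_right hb1.le).symm
          _ ≤ M b 1 := (hmean b 1 hb one_pos).1
      · -- 1 < a < b
        push_neg at ha1
        set t : ℝ := Real.logb b a with htdef
        have hlb : 0 < Real.log b := Real.log_pos hb1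
        have hlab : Real.log a < Real.log b := Real.log_lt_log ha hab
        have ht0 : 0 ≤ t := div_nonneg (Real.log_nonneg ha1.le) hlb.le
        have ht1 : t < 1 := by
          rw [htdef, Real.logb, div_lt_one hlb]
          exact hlab
        have hbt : b ^ t = a := Real.rpow_logb hb hb1.ne' ha
        have := (hMt t ⟨lt_of_lt_of_le (by norm_num) ht0, ht1⟩ b 1 hb one_pos).1
        rw [Real.one_rpow, hbt, min_eq_right hb1.le] at this
        have he : 0 < 1 / (1 - t) := div_pos one_pos (by linarith)
        have hge1 : 1 ≤ M b 1 / M a 1 := by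
          have hMb := hfpos b hb
          have hMa := hfpos a ha
          by_contra h
          push_neg at h
          exact absurd this
            (not_le.mpr (Real.rpow_lt_one (by positivity) h he))
        exact (one_le_div (hfpos a ha)).mp hge1
  intro x₁ y₁ x₂ y₂ hx₁ hy₁ hx hy
  have hx₂ : 0 < x₂ := hx₁.trans_le hx
  have hy₂ : 0 < y₂ := hy₁.trans_le hy
  have step1 : M x₁ y₁ ≤ M x₂ y₁ := by
    have h1 : M x₁ y₁ = y₁ * M (x₁ / y₁) 1 := by
      rw [← hhom y₁ (x₁ / y₁) 1 hy₁ (by positivity) one_pos,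
        mul_div_cancel₀ _ hy₁.ne', mul_one]
    have h2 : M x₂ y₁ = y₁ * M (x₂ / y₁) 1 := by
      rw [← hhom y₁ (x₂ / y₁) 1 hy₁ (by positivity) one_pos,
        mul_div_cancel₀ _ hy₁.ne', mul_one]
    rw [h1, h2]
    exact mul_le_mul_of_nonneg_left
      (fmono _ _ (by positivity) (div_le_div_of_nonneg_right hx hy₁.le)) hy₁.le
  have step2 : M x₂ y₁ ≤ M x₂ y₂ := by
    have h1 : M x₂ y₁ = x₂ * M (y₁ / x₂) 1 := by
      rw [hsym x₂ y₁ hx₂ hy₁, ← hhom x₂ (y₁ / x₂) 1 hx₂ (by positivity) one_pos,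
        mul_div_cancel₀ _ hx₂.ne', mul_one]
    have h2 : M x₂ y₂ = x₂ * M (y₂ / x₂) 1 := by
      rw [hsym x₂ y₂ hx₂ hy₂, ← hhom x₂ (y₂ / x₂) 1 hx₂ (by positivity) one_pos,
        mul_div_cancel₀ _ hx₂.ne', mul_one]
    rw [h1, h2]
    exact mul_le_mul_of_nonneg_left
      (fmono _ _ (by positivity) (div_le_div_of_nonneg_right hy hx₂.le)) hx₂.le
  exact step1.trans step2
end

section
/- Let M : ℝ₊² → ℝ₊ be a monotone, homogeneous, symmetric mean, t ∈ (-1,1), and M_t(x,y) = (M(x,y)/M(x^t,y^t))^{1/(1-t)}. Then the functions K_t(x,y) = x^t·M_t(x,y)^{1-t} and L_t(x,y) = y^t·M_t(x,y)^{1-t} are homogeneous means and satisfy M(K_t(x,y), L_t(x,y)) = M(x,y) for all x, y > 0. -/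
theorem Kt_Lt_homogeneous_means_invariance (M : ℝ → ℝ → ℝ)
    (hmean : ∀ x y : ℝ, 0 < x → 0 < y → min x y ≤ M x y ∧ M x y ≤ max x y)
    (hhom : ∀ l x y : ℝ, 0 < l → 0 < x → 0 < y → M (l * x) (l * y) = l * M x y)
    (hsym : ∀ x y : ℝ, 0 < x → 0 < y → M x y = M y x)
    (hmono : ∀ x₁ y₁ x₂ y₂ : ℝ, 0 < x₁ → 0 < y₁ → x₁ ≤ x₂ → y₁ ≤ y₂ → M x₁ y₁ ≤ M x₂ y₂)
    (t : ℝ) (ht : t ∈ Set.Ioo (-1 : ℝ) 1)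
    (Mt K L : ℝ → ℝ → ℝ)
    (hMt : ∀ x y : ℝ, Mt x y = (M x y / M (x ^ t) (y ^ t)) ^ (1 / (1 - t)))
    (hK : ∀ x y : ℝ, K x y = x ^ t * (Mt x y) ^ (1 - t))
    (hL : ∀ x y : ℝ, L x y = y ^ t * (Mt x y) ^ (1 - t)) :
    (∀ l x y : ℝ, 0 < l → 0 < x → 0 < y →
        K (l * x) (l * y) = l * K x y ∧ L (l * x) (l * y) = l * L x y) ∧
    (∀ x y : ℝ, 0 < x → 0 < y →
        min x y ≤ K x y ∧ K x y ≤ max x y ∧ min x y ≤ L x y ∧ L x y ≤ max x y) ∧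
    (∀ x y : ℝ, 0 < x → 0 < y → M (K x y) (L x y) = M x y) := by
  obtain ⟨ht1, ht2⟩ := ht
  have h1t : (0:ℝ) < 1 - t := by linarith
  have hMpos : ∀ x y : ℝ, 0 < x → 0 < y → 0 < M x y := fun x y hx hy =>
    lt_of_lt_of_le (lt_min hx hy) (hmean x y hx hy).1
  -- closed form for Mt ^ (1-t)
  have hMtval : ∀ x y : ℝ, 0 < x → 0 < y →
      (Mt x y) ^ (1 - t) = M x y / M (x ^ t) (y ^ t) := by
    intro x y hx hy
    have hpos : 0 < M x y / M (x ^ t) (y ^ t) :=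
      div_pos (hMpos x y hx hy)
        (hMpos _ _ (Real.rpow_pos_of_pos hx t) (Real.rpow_pos_of_pos hy t))
    rw [hMt, ← Real.rpow_mul hpos.le, one_div,
      inv_mul_cancel₀ (ne_of_gt h1t), Real.rpow_one]
  have hKval : ∀ x y : ℝ, 0 < x → 0 < y →
      K x y = x ^ t * M x y / M (x ^ t) (y ^ t) := by
    intro x y hx hy
    rw [hK, hMtval x y hx hy, mul_div_assoc]
  have hLval : ∀ x y : ℝ, 0 < x → 0 < y →
      L x y = y ^ t * M x y / M (x ^ t) (y ^ t) := by
    intro x y hx hy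
    rw [hL, hMtval x y hx hy, mul_div_assoc]
  -- swap lemma
  have hswapK : ∀ x y : ℝ, 0 < x → 0 < y → K x y = L y x := by
    intro x y hx hy
    rw [hKval x y hx hy, hLval y x hy hx, hsym x y hx hy,
      hsym (x ^ t) (y ^ t) (Real.rpow_pos_of_pos hx t) (Real.rpow_pos_of_pos hy t)]
  -- bounds in the ordered case
  have key : ∀ x y : ℝ, 0 < x → 0 < y → x ≤ y →
      (x ≤ K x y ∧ K x y ≤ y) ∧ (x ≤ L x y ∧ L x y ≤ y) := by
    intro x y hx hy hxy
    have pxt := Real.rpow_pos_of_pos hx t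
    have pyt := Real.rpow_pos_of_pos hy t
    have pMt := hMpos _ _ pxt pyt
    have pM := hMpos x y hx hy
    have hxsplit : x ^ t * x ^ (1 - t) = x := by
      rw [← Real.rpow_add hx, show t + (1 - t) = 1 by ring, Real.rpow_one]
    have hysplit : y ^ t * y ^ (1 - t) = y := by
      rw [← Real.rpow_add hy, show t + (1 - t) = 1 by ring, Real.rpow_one]
    have h1 : x ^ (1 - t) ≤ y ^ (1 - t) := Real.rpow_le_rpow hx.le hxy h1t.le
    have hA : x ^ t * x ≤ y ^ t * y := by
      have h := Real.rpow_le_rpow hx.le hxy (by linarith : (0:ℝ) ≤ t + 1)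
      rw [Real.rpow_add hx, Real.rpow_add hy, Real.rpow_one, Real.rpow_one] at h
      exact h
    have hB : x * y ^ t ≤ x ^ t * y := by
      calc x * y ^ t = (x ^ t * x ^ (1 - t)) * y ^ t := by rw [hxsplit]
        _ ≤ (x ^ t * y ^ (1 - t)) * y ^ t := by
            have := mul_le_mul_of_nonneg_right
              (mul_le_mul_of_nonneg_left h1 pxt.le) pyt.le
            exact this
        _ = x ^ t * (y ^ t * y ^ (1 - t)) := by ring
        _ = x ^ t * y := by rw [hysplit]
    constructor
    · constructor
      · -- x ≤ K x y
        rw [hKval x y hx hy, le_div_iff₀ pMt]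
        calc x * M (x ^ t) (y ^ t) = M (x * x ^ t) (x * y ^ t) := (hhom x _ _ hx pxt pyt).symm
          _ ≤ M (x ^ t * x) (x ^ t * y) := by
              apply hmono _ _ _ _ (mul_pos hx pxt) (mul_pos hx pyt)
                (le_of_eq (mul_comm x (x ^ t))) hB
          _ = x ^ t * M x y := hhom _ _ _ pxt hx hy
      · -- K x y ≤ y
        rw [hKval x y hx hy, div_le_iff₀ pMt]
        calc x ^ t * M x y = M (x ^ t * x) (x ^ t * y) := (hhom _ _ _ pxt hx hy).symm
          _ = M (x ^ t * y) (x ^ t * x) := hsym _ _ (mul_pos pxt hx) (mul_pos pxt hy)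
          _ ≤ M (y * x ^ t) (y * y ^ t) := by
              apply hmono _ _ _ _ (mul_pos pxt hy) (mul_pos pxt hx)
                (le_of_eq (mul_comm (x ^ t) y)) (hA.trans (le_of_eq (mul_comm _ _)))
          _ = y * M (x ^ t) (y ^ t) := hhom _ _ _ hy pxt pyt
    · constructor
      · -- x ≤ L x y
        rw [hLval x y hx hy, le_div_iff₀ pMt]
        calc x * M (x ^ t) (y ^ t) = M (x * x ^ t) (x * y ^ t) := (hhom x _ _ hx pxt pyt).symm
          _ = M (x * y ^ t) (x * x ^ t) := hsym _ _ (mul_pos hx pxt) (mul_pos hx pyt)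
          _ ≤ M (y ^ t * x) (y ^ t * y) := by
              apply hmono _ _ _ _ (mul_pos hx pyt) (mul_pos hx pxt)
                (le_of_eq (mul_comm x (y ^ t)))
              calc x * x ^ t = x ^ t * x := mul_comm _ _
                _ ≤ y ^ t * y := hA
          _ = y ^ t * M x y := hhom _ _ _ pyt hx hy
      · -- L x y ≤ y
        rw [hLval x y hx hy, div_le_iff₀ pMt]
        calc y ^ t * M x y = M (y ^ t * x) (y ^ t * y) := (hhom _ _ _ pyt hx hy).symm
          _ ≤ M (y * x ^ t) (y * y ^ t) := by
              apply hmono _ _ _ _ (mul_pos pyt hx) (mul_pos pyt hy)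
              · calc y ^ t * x = x * y ^ t := mul_comm _ _
                  _ ≤ x ^ t * y := hB
                  _ = y * x ^ t := mul_comm _ _
              · exact le_of_eq (mul_comm (y ^ t) y)
          _ = y * M (x ^ t) (y ^ t) := hhom _ _ _ hy pxt pyt
  refine ⟨?_, ?_, ?_⟩
  · -- homogeneity
    intro l x y hl hx hy
    have plx := mul_pos hl hx
    have ply := mul_pos hl hy
    have plt := Real.rpow_pos_of_pos hl t
    have pxt := Real.rpow_pos_of_pos hx t
    have pyt := Real.rpow_pos_of_pos hy t
    have pMt := hMpos _ _ pxt pyt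
    have hxlt : (l * x) ^ t = l ^ t * x ^ t := Real.mul_rpow hl.le hx.le
    have hylt : (l * y) ^ t = l ^ t * y ^ t := Real.mul_rpow hl.le hy.le
    have hMden : M ((l * x) ^ t) ((l * y) ^ t) = l ^ t * M (x ^ t) (y ^ t) := by
      rw [hxlt, hylt]; exact hhom _ _ _ plt pxt pyt
    constructor
    · rw [hKval _ _ plx ply, hKval _ _ hx hy, hMden, hxlt, hhom l x y hl hx hy]
      field_simp
    · rw [hLval _ _ plx ply, hLval _ _ hx hy, hMden, hylt, hhom l x y hl hx hy]
      field_simp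
  · -- mean property
    intro x y hx hy
    rcases le_total x y with hxy | hxy
    · obtain ⟨⟨hK1, hK2⟩, hL1, hL2⟩ := key x y hx hy hxy
      rw [min_eq_left hxy, max_eq_right hxy]
      exact ⟨hK1, hK2, hL1, hL2⟩
    · obtain ⟨⟨hK1, hK2⟩, hL1, hL2⟩ := key y x hy hx hxy
      rw [min_eq_right hxy, max_eq_left hxy, hswapK x y hx hy,
        show L x y = K y x from (hswapK y x hy hx).symm]
      exact ⟨hL1, hL2, hK1, hK2⟩
  · -- invariance
    intro x y hx hy
    have pxt := Real.rpow_pos_of_pos hx t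
    have pyt := Real.rpow_pos_of_pos hy t
    have pMt := hMpos _ _ pxt pyt
    have pM := hMpos x y hx hy
    have hc : 0 < M x y / M (x ^ t) (y ^ t) := div_pos pM pMt
    have hKc : K x y = (M x y / M (x ^ t) (y ^ t)) * x ^ t := by
      rw [hKval x y hx hy]; ring
    have hLc : L x y = (M x y / M (x ^ t) (y ^ t)) * y ^ t := by
      rw [hLval x y hx hy]; ring
    rw [hKc, hLc, hhom _ _ _ hc pxt pyt, div_mul_cancel₀ _ (ne_of_gt pMt)]
end

section
/- Let M be a monotone, homogeneous, symmetric mean with M ≠ max, t ∈ (0,1), M_t as above, and L_t(x,y) = y^t·M_t(x,y)^{1-t}. If lim_{x→0+} M(x,1) > 0, then the trace function l_t(x) = L_t(x,1) satisfies lim_{x→0+} l_t(x) = 1 = l_t(1), hence L_t is not a monotone mean. -/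
theorem Lt_not_monotone (M : ℝ → ℝ → ℝ)
    (hmean : ∀ x y : ℝ, 0 < x → 0 < y → min x y ≤ M x y ∧ M x y ≤ max x y)
    (hhom : ∀ l x y : ℝ, 0 < l → 0 < x → 0 < y → M (l * x) (l * y) = l * M x y)
    (hsym : ∀ x y : ℝ, 0 < x → 0 < y → M x y = M y x)
    (hmono : ∀ x₁ y₁ x₂ y₂ : ℝ, 0 < x₁ → 0 < y₁ → x₁ ≤ x₂ → y₁ ≤ y₂ → M x₁ y₁ ≤ M x₂ y₂)
    (hMnotmax : ∃ x y : ℝ, 0 < x ∧ 0 < y ∧ M x y ≠ max x y)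
    (t : ℝ) (ht : t ∈ Set.Ioo (0 : ℝ) 1)
    (Mt L : ℝ → ℝ → ℝ)
    (hMt : ∀ x y : ℝ, Mt x y = (M x y / M (x ^ t) (y ^ t)) ^ (1 / (1 - t)))
    (hL : ∀ x y : ℝ, L x y = y ^ t * (Mt x y) ^ (1 - t))
    (hlim : ∃ c : ℝ, 0 < c ∧
      Filter.Tendsto (fun x => M x 1) (nhdsWithin 0 (Set.Ioi 0)) (nhds c)) :
    Filter.Tendsto (fun x => L x 1) (nhdsWithin 0 (Set.Ioi 0)) (nhds 1) ∧
    L 1 1 = 1 ∧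
    ¬ (∀ x₁ y₁ x₂ y₂ : ℝ, 0 < x₁ → 0 < y₁ → x₁ ≤ x₂ → y₁ ≤ y₂ → L x₁ y₁ ≤ L x₂ y₂) := by
  obtain ⟨ht0, ht1⟩ := ht
  have h1t : (0:ℝ) < 1 - t := by linarith
  have Mpos : ∀ x : ℝ, 0 < x → 0 < M x 1 := fun x hx =>
    lt_of_lt_of_le (lt_min hx one_pos) (hmean x 1 hx one_pos).1
  have M11 : M 1 1 = 1 := by
    have h := hmean 1 1 one_pos one_pos
    simp at h
    exact le_antisymm h.2 h.1
  -- trace formula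
  have hL1 : ∀ x : ℝ, 0 < x → L x 1 = M x 1 / M (x ^ t) 1 := by
    intro x hx
    have hxt : 0 < x ^ t := Real.rpow_pos_of_pos hx t
    have hq : (0:ℝ) ≤ M x 1 / M (x ^ t) 1 :=
      div_nonneg (Mpos x hx).le (Mpos _ hxt).le
    rw [hL, hMt, Real.one_rpow, one_mul,
      ← Real.rpow_mul hq, one_div_mul_cancel (ne_of_gt h1t), Real.rpow_one]
  obtain ⟨c, hc, hMc⟩ := hlim
  -- the limit
  have hmap : Filter.Tendsto (fun x : ℝ => x ^ t) (nhdsWithin 0 (Set.Ioi 0))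
      (nhdsWithin 0 (Set.Ioi 0)) := by
    apply tendsto_nhdsWithin_of_tendsto_nhds_of_eventually_within
    · have hca : ContinuousAt (fun x : ℝ => x ^ t) 0 :=
        Real.continuousAt_rpow_const 0 t (Or.inr ht0.le)
      have := hca.tendsto.mono_left (nhdsWithin_le_nhds (s := Set.Ioi (0:ℝ)))
      simpa [Real.zero_rpow (ne_of_gt ht0)] using this
    · filter_upwards [self_mem_nhdsWithin] with x hx
      exact Real.rpow_pos_of_pos hx t
  have hMct : Filter.Tendsto (fun x : ℝ => M (x ^ t) 1) (nhdsWithin 0 (Set.Ioi 0))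
      (nhds c) := hMc.comp hmap
  have hlimL : Filter.Tendsto (fun x => L x 1) (nhdsWithin 0 (Set.Ioi 0)) (nhds 1) := by
    have h := hMc.div hMct (ne_of_gt hc)
    rw [div_self (ne_of_gt hc)] at h
    apply h.congr'
    filter_upwards [self_mem_nhdsWithin] with x hx
    exact (hL1 x hx).symm
  have hL11 : L 1 1 = 1 := by
    rw [hL1 1 one_pos, Real.one_rpow, M11, div_one]
  refine ⟨hlimL, hL11, ?_⟩
  intro hmonoL
  -- under monotonicity, L x 1 = 1 on (0,1]
  have hLe : ∀ x : ℝ, 0 < x → x ≤ 1 → L x 1 = 1 := by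
    intro x hx hx1
    have hub : L x 1 ≤ 1 := by
      have := hmonoL x 1 1 1 hx one_pos hx1 le_rfl
      rwa [hL11] at this
    have hlb : 1 ≤ L x 1 := by
      refine le_of_tendsto hlimL ?_
      filter_upwards [Ioo_mem_nhdsGT_of_mem (Set.mem_Ico.2 ⟨le_rfl, hx⟩)] with y hy
      exact hmonoL y 1 x 1 hy.1 one_pos hy.2.le le_rfl
    linarith
  -- hence M x 1 = M (x^t) 1 on (0,1]
  have hfix : ∀ x : ℝ, 0 < x → x ≤ 1 → M x 1 = M (x ^ t) 1 := by
    intro x hx hx1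
    have h := hLe x hx hx1
    rw [hL1 x hx] at h
    have hden : M (x ^ t) 1 ≠ 0 := ne_of_gt (Mpos _ (Real.rpow_pos_of_pos hx t))
    field_simp at h
    exact h
  -- iterate
  have hiter : ∀ n : ℕ, ∀ x : ℝ, 0 < x → x ≤ 1 → M x 1 = M (x ^ (t ^ n)) 1 := by
    intro n
    induction n with
    | zero => intro x hx hx1; simp
    | succ n ih =>
      intro x hx hx1
      have hpos : 0 < x ^ (t ^ n) := Real.rpow_pos_of_pos hx _
      have hle1 : x ^ (t ^ n) ≤ 1 := Real.rpow_le_one hx.le hx1 (pow_nonneg ht0.le n)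
      rw [ih x hx hx1, hfix _ hpos hle1, ← Real.rpow_mul hx.le, ← pow_succ]
  -- hence M x 1 = 1 on (0,1]
  have hone : ∀ x : ℝ, 0 < x → x ≤ 1 → M x 1 = 1 := by
    intro x hx hx1
    have hub : M x 1 ≤ 1 := by
      have := (hmean x 1 hx one_pos).2
      rwa [max_eq_right hx1] at this
    have hlb : 1 ≤ M x 1 := by
      have hseq : Filter.Tendsto (fun n : ℕ => x ^ (t ^ n)) Filter.atTop (nhds 1) := by
        have h1 : Filter.Tendsto (fun n : ℕ => t ^ n) Filter.atTop (nhds 0) :=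
          tendsto_pow_atTop_nhds_zero_of_lt_one ht0.le ht1
        have h2 : ContinuousAt (fun r : ℝ => x ^ r) 0 :=
          Real.continuousAt_const_rpow (ne_of_gt hx)
        have := h2.tendsto.comp h1
        simpa [Function.comp_def, Real.rpow_zero] using this
      refine le_of_tendsto hseq ?_
      filter_upwards with n
      have hpos : 0 < x ^ (t ^ n) := Real.rpow_pos_of_pos hx _
      have hle1 : x ^ (t ^ n) ≤ 1 := Real.rpow_le_one hx.le hx1 (pow_nonneg ht0.le n)
      calc x ^ (t ^ n) = min (x ^ (t ^ n)) 1 := (min_eq_left hle1).symm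
        _ ≤ M (x ^ (t ^ n)) 1 := (hmean _ 1 hpos one_pos).1
        _ = M x 1 := (hiter n x hx hx1).symm
    linarith
  -- hence M = max, contradiction
  have hmax : ∀ a b : ℝ, 0 < a → 0 < b → a ≤ b → M a b = b := by
    intro a b ha hb hab
    have h := hhom b (a / b) 1 hb (div_pos ha hb) one_pos
    rw [mul_div_cancel₀ _ (ne_of_gt hb), mul_one] at h
    rw [h, hone (a / b) (div_pos ha hb) ((div_le_one hb).2 hab), mul_one]
  obtain ⟨a, b, ha, hb, hne⟩ := hMnotmax
  rcases le_total a b with hab | hab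
  · exact hne (by rw [hmax a b ha hb hab, max_eq_right hab])
  · exact hne (by rw [hsym a b ha hb, hmax b a hb ha hab, max_eq_left hab])
end

section
/- For 0 < t < 1/2 and arbitrary means C, D on ℝ₊², the function N(x,y) = (G(x,y)/G(C(x,y)^t, D(x,y)^t))^{1/(1-t)} is a mean, where G is the geometric mean. -/
theorem G_ratio_is_mean (t : ℝ) (ht : t ∈ Set.Ioo (0 : ℝ) (1 / 2))
    (C D : ℝ → ℝ → ℝ)
    (hC : ∀ x y : ℝ, 0 < x → 0 < y → min x y ≤ C x y ∧ C x y ≤ max x y)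
    (hD : ∀ x y : ℝ, 0 < x → 0 < y → min x y ≤ D x y ∧ D x y ≤ max x y)
    (x y : ℝ) (hx : 0 < x) (hy : 0 < y) :
    min x y ≤ (Real.sqrt (x * y) / Real.sqrt ((C x y) ^ t * (D x y) ^ t)) ^ (1 / (1 - t)) ∧
      (Real.sqrt (x * y) / Real.sqrt ((C x y) ^ t * (D x y) ^ t)) ^ (1 / (1 - t)) ≤ max x y := by
  obtain ⟨ht0, ht2⟩ := ht
  set m := min x y with hm_def
  set M := max x y with hM_def
  have hm : 0 < m := lt_min hx hy
  have hmM : m ≤ M := min_le_max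
  have hM : 0 < M := lt_of_lt_of_le hm hmM
  have h1t : 0 < 1 - t := by linarith
  obtain ⟨hC1, hC2⟩ := hC x y hx hy
  obtain ⟨hD1, hD2⟩ := hD x y hx hy
  have hCpos : 0 < C x y := lt_of_lt_of_le hm hC1
  have hDpos : 0 < D x y := lt_of_lt_of_le hm hD1
  set s := Real.sqrt ((C x y) ^ t * (D x y) ^ t) with hs_def
  have hprod_lo : m ^ t * m ^ t ≤ C x y ^ t * D x y ^ t :=
    mul_le_mul (Real.rpow_le_rpow hm.le hC1 ht0.le) (Real.rpow_le_rpow hm.le hD1 ht0.le)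
      (Real.rpow_nonneg hm.le t) (Real.rpow_nonneg hCpos.le t)
  have hprod_hi : C x y ^ t * D x y ^ t ≤ M ^ t * M ^ t :=
    mul_le_mul (Real.rpow_le_rpow hCpos.le hC2 ht0.le) (Real.rpow_le_rpow hDpos.le hD2 ht0.le)
      (Real.rpow_nonneg hDpos.le t) (Real.rpow_nonneg hM.le t)
  have hs_lo : m ^ t ≤ s := by
    have h := Real.sqrt_le_sqrt hprod_lo
    rwa [Real.sqrt_mul_self (Real.rpow_nonneg hm.le t)] at h
  have hs_hi : s ≤ M ^ t := by
    have h := Real.sqrt_le_sqrt hprod_hi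
    rwa [Real.sqrt_mul_self (Real.rpow_nonneg hM.le t)] at h
  have hs_pos : 0 < s := lt_of_lt_of_le (Real.rpow_pos_of_pos hm t) hs_lo
  have hxy : Real.sqrt (x * y) = m ^ (1/2 : ℝ) * M ^ (1/2 : ℝ) := by
    rw [← min_mul_max x y, Real.sqrt_mul hm.le, Real.sqrt_eq_rpow, Real.sqrt_eq_rpow]
  have hsplit_m : m ^ ((1:ℝ)/2) = m ^ t * m ^ ((1:ℝ)/2 - t) := by
    rw [← Real.rpow_add hm]; ring_nf
  have hsplit_M : M ^ ((1:ℝ)/2) = M ^ t * M ^ ((1:ℝ)/2 - t) := by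
    rw [← Real.rpow_add hM]; ring_nf
  have hsplit_m1 : m ^ (1 - t) = m ^ ((1:ℝ)/2) * m ^ ((1:ℝ)/2 - t) := by
    rw [← Real.rpow_add hm]; ring_nf
  have hsplit_M1 : M ^ (1 - t) = M ^ ((1:ℝ)/2) * M ^ ((1:ℝ)/2 - t) := by
    rw [← Real.rpow_add hM]; ring_nf
  have hmid : m ^ ((1:ℝ)/2 - t) ≤ M ^ ((1:ℝ)/2 - t) :=
    Real.rpow_le_rpow hm.le hmM (by linarith)
  have hr_lo : m ^ (1 - t) ≤ Real.sqrt (x * y) / s := by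
    rw [le_div_iff₀ hs_pos, hxy, hsplit_m1, hsplit_M]
    calc m ^ ((1:ℝ)/2) * m ^ ((1:ℝ)/2 - t) * s
        ≤ m ^ ((1:ℝ)/2) * m ^ ((1:ℝ)/2 - t) * M ^ t := by
          apply mul_le_mul_of_nonneg_left hs_hi
          positivity
      _ ≤ m ^ ((1:ℝ)/2) * M ^ ((1:ℝ)/2 - t) * M ^ t := by
          have := mul_le_mul_of_nonneg_left hmid (Real.rpow_nonneg hm.le ((1:ℝ)/2))
          nlinarith [Real.rpow_nonneg hM.le t]
      _ = m ^ ((1:ℝ)/2) * (M ^ t * M ^ ((1:ℝ)/2 - t)) := by ring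
  have hr_hi : Real.sqrt (x * y) / s ≤ M ^ (1 - t) := by
    rw [div_le_iff₀ hs_pos, hxy]
    calc m ^ ((1:ℝ)/2) * M ^ ((1:ℝ)/2)
        = m ^ t * m ^ ((1:ℝ)/2 - t) * M ^ ((1:ℝ)/2) := by rw [← hsplit_m]
      _ ≤ m ^ t * M ^ ((1:ℝ)/2 - t) * M ^ ((1:ℝ)/2) := by
          have h := mul_le_mul_of_nonneg_left hmid (Real.rpow_nonneg hm.le t)
          exact mul_le_mul_of_nonneg_right h (Real.rpow_nonneg hM.le _)
      _ = M ^ (1 - t) * m ^ t := by rw [hsplit_M1]; ring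
      _ ≤ M ^ (1 - t) * s :=
          mul_le_mul_of_nonneg_left hs_lo (Real.rpow_nonneg hM.le _)
  have hrpos : 0 ≤ Real.sqrt (x * y) / s := by positivity
  have hp : (0:ℝ) ≤ 1 / (1 - t) := by positivity
  have key : (1 - t) * (1 / (1 - t)) = 1 := mul_one_div_cancel h1t.ne'
  constructor
  · have h := Real.rpow_le_rpow (Real.rpow_nonneg hm.le (1 - t)) hr_lo hp
    rwa [← Real.rpow_mul hm.le, key, Real.rpow_one] at h
  · have h := Real.rpow_le_rpow hrpos hr_hi hp
    rwa [← Real.rpow_mul hM.le, key, Real.rpow_one] at h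
end

section
/- For every t ∈ (0,1), the function N(x,y) = (A(x,y)/A(A(x,y)^t, H(x,y)^t))^{1/(1-t)} is not a mean: there exists x > 1 with N(x,1) > x. -/
noncomputable def amean (x y : ℝ) : ℝ := (x + y) / 2
noncomputable def hmean (x y : ℝ) : ℝ := 2 * x * y / (x + y)

theorem A_AH_not_mean (t : ℝ) (ht : t ∈ Set.Ioo (0 : ℝ) 1) :
    ∃ x : ℝ, 1 < x ∧
      (amean x 1 / amean ((amean x 1) ^ t) ((hmean x 1) ^ t)) ^ (1 / (1 - t)) > x := by
  obtain ⟨ht0, ht1⟩ := ht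
  have h1t : 0 < 1 - t := by linarith
  have h2t : (1 : ℝ) < (2 : ℝ) ^ t := by
    calc (1 : ℝ) = (2 : ℝ) ^ (0 : ℝ) := by simp
      _ < (2 : ℝ) ^ t := Real.rpow_lt_rpow_of_exponent_lt one_lt_two ht0
  set c : ℝ := (2 : ℝ) ^ t - 1 with hc_def
  clear_value c
  have hc : 0 < c := by linarith
  have h4pos : (0 : ℝ) < (4 : ℝ) ^ t := Real.rpow_pos_of_pos (by norm_num) t
  have hqpos : (0 : ℝ) < (4 : ℝ) ^ t / c := div_pos h4pos hc
  have hqpow : (0 : ℝ) < ((4 : ℝ) ^ t / c) ^ (1 / t) := Real.rpow_pos_of_pos hqpos _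
  set x : ℝ := ((4 : ℝ) ^ t / c) ^ (1 / t) + 1 with hx_def
  clear_value x
  have hx1 : 1 < x := by rw [hx_def]; linarith
  have hx0 : (0 : ℝ) < x := by linarith
  have hxp1 : (0 : ℝ) < x + 1 := by linarith
  -- key power bound: 4^t / c < x^t
  have hxt : (4 : ℝ) ^ t / c < x ^ t := by
    have h1 : ((4 : ℝ) ^ t / c) ^ (1 / t) < x := by rw [hx_def]; linarith
    have h2 : (((4 : ℝ) ^ t / c) ^ (1 / t)) ^ t < x ^ t :=
      Real.rpow_lt_rpow (le_of_lt hqpow) h1 ht0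
    rwa [← Real.rpow_mul (le_of_lt hqpos), one_div,
      inv_mul_cancel₀ (ne_of_gt ht0), Real.rpow_one] at h2
  set A : ℝ := (x + 1) / 2 with hA_def
  set H : ℝ := 2 * x / (x + 1) with hH_def
  have hApos : 0 < A := by rw [hA_def]; positivity
  have hHpos : 0 < H := by rw [hH_def]; positivity
  have hH2 : H < 2 := by
    rw [hH_def, div_lt_iff₀ hxp1]; linarith
  have hAt : A ^ t = (x + 1) ^ t / (2 : ℝ) ^ t := by
    rw [hA_def, Real.div_rpow (le_of_lt hxp1) (by norm_num)]
  clear_value A H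
  set S : ℝ := (A ^ t + H ^ t) / 2 with hS_def
  have hSpos : 0 < S := by
    have h1 := Real.rpow_pos_of_pos hApos t
    have h2 := Real.rpow_pos_of_pos hHpos t
    rw [hS_def]; positivity
  have h2tp : (0 : ℝ) < (2 : ℝ) ^ t := by linarith
  -- bound 1 : x^(1-t) * A^t ≤ (x+1)/2^t
  have hxle : x ^ (1 - t) ≤ (x + 1) ^ (1 - t) :=
    Real.rpow_le_rpow (le_of_lt hx0) (by linarith) (le_of_lt h1t)
  have hx1tpos : (0 : ℝ) < x ^ (1 - t) := Real.rpow_pos_of_pos hx0 _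
  have hxp1t : (0 : ℝ) < (x + 1) ^ t := Real.rpow_pos_of_pos hxp1 t
  have hb1 : x ^ (1 - t) * A ^ t ≤ (x + 1) / (2 : ℝ) ^ t := by
    rw [hAt, ← mul_div_assoc, div_le_div_iff₀ h2tp h2tp]
    have hmul : x ^ (1 - t) * (x + 1) ^ t ≤ (x + 1) ^ (1 - t) * (x + 1) ^ t :=
      mul_le_mul_of_nonneg_right hxle (le_of_lt hxp1t)
    have hprod : (x + 1) ^ (1 - t) * (x + 1) ^ t = x + 1 := by
      rw [← Real.rpow_add hxp1]; norm_num
    nlinarith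
  -- bound 2 : x^(1-t) * H^t < (x+1)*c/2^t
  have hHt : H ^ t < (2 : ℝ) ^ t := Real.rpow_lt_rpow (le_of_lt hHpos) hH2 ht0
  have h44 : (2 : ℝ) ^ t * (2 : ℝ) ^ t = (4 : ℝ) ^ t := by
    rw [← Real.mul_rpow (by norm_num) (by norm_num)]; norm_num
  have hb2' : x ^ (1 - t) * (4 : ℝ) ^ t < x * c := by
    have hxsplit : x ^ (1 - t) * x ^ t = x := by
      rw [← Real.rpow_add hx0]; norm_num
    have h1 : x ^ (1 - t) * ((4 : ℝ) ^ t / c) < x ^ (1 - t) * x ^ t :=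
      mul_lt_mul_of_pos_left hxt hx1tpos
    rw [hxsplit] at h1
    have h2 := mul_lt_mul_of_pos_right h1 hc
    calc x ^ (1 - t) * (4 : ℝ) ^ t
        = x ^ (1 - t) * ((4 : ℝ) ^ t / c) * c := by field_simp
      _ < x * c := h2
  have hb2 : x ^ (1 - t) * H ^ t < (x + 1) * c / (2 : ℝ) ^ t := by
    rw [lt_div_iff₀ h2tp]
    have step1 : x ^ (1 - t) * H ^ t * 2 ^ t < x ^ (1 - t) * 2 ^ t * 2 ^ t := by
      have := mul_lt_mul_of_pos_left hHt hx1tpos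
      nlinarith
    have step2 : x ^ (1 - t) * 2 ^ t * 2 ^ t = x ^ (1 - t) * 4 ^ t := by
      rw [mul_assoc, h44]
    nlinarith
  -- combine: x^(1-t) * S < A
  have hkey : x ^ (1 - t) * S < A := by
    have hsplit : (x + 1) / 2 ^ t + (x + 1) * c / 2 ^ t = x + 1 := by
      rw [← add_div, hc_def]
      field_simp
      ring
    have hsum : x ^ (1 - t) * A ^ t + x ^ (1 - t) * H ^ t < x + 1 := by linarith
    rw [hS_def]
    calc x ^ (1 - t) * ((A ^ t + H ^ t) / 2)
        = (x ^ (1 - t) * A ^ t + x ^ (1 - t) * H ^ t) / 2 := by ring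
      _ < (x + 1) / 2 := by linarith
      _ = A := hA_def.symm
  have hdiv : x ^ (1 - t) < A / S := (lt_div_iff₀ hSpos).mpr hkey
  refine ⟨x, hx1, ?_⟩
  show x < (amean x 1 / amean ((amean x 1) ^ t) ((hmean x 1) ^ t)) ^ (1 / (1 - t))
  have hAm : amean x 1 = A := by rw [amean, hA_def]
  have hHm : hmean x 1 = H := by rw [hmean, hH_def]; ring_nf
  have hSm : amean (A ^ t) (H ^ t) = S := by rw [amean, hS_def]
  rw [hAm, hHm, hSm]
  have hfin : (x ^ (1 - t)) ^ (1 / (1 - t)) < (A / S) ^ (1 / (1 - t)) :=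
    Real.rpow_lt_rpow (le_of_lt hx1tpos) hdiv (by positivity)
  rwa [← Real.rpow_mul (le_of_lt hx0), mul_one_div, div_self (ne_of_gt h1t),
    Real.rpow_one] at hfin
end

section
/- The function N(x,y) = (L(x,y) / L(A(x,y)^{1/2}, H(x,y)^{1/2}))² is a mean on ℝ₊², where L is the logarithmic mean, A the arithmetic mean, and H the harmonic mean. -/
open Real

private lemma nonneg_of_deriv (f f' : ℝ → ℝ) (hf : ∀ t, HasDerivAt f (f' t) t)
    (h0 : f 0 = 0) (hf' : ∀ t, 0 < t → 0 ≤ f' t) {t : ℝ} (ht : 0 ≤ t) : 0 ≤ f t := by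
  have hm : MonotoneOn f (Set.Ici (0:ℝ)) := by
    apply monotoneOn_of_hasDerivWithinAt_nonneg (convex_Ici 0)
      (fun u _ => (hf u).continuousAt.continuousWithinAt)
      (fun u _ => (hf u).hasDerivWithinAt)
    intro u hu
    rw [interior_Ici] at hu
    exact hf' u hu
  have := hm Set.self_mem_Ici (Set.mem_Ici.mpr ht) ht
  rwa [h0] at this

private lemma sinh_le_mul_cosh {t : ℝ} (ht : 0 ≤ t) : Real.sinh t ≤ t * Real.cosh t := by
  have h := nonneg_of_deriv (fun u => u * Real.cosh u - Real.sinh u) (fun u => u * Real.sinh u)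
    (fun u => by
      have := ((hasDerivAt_id u).mul (Real.hasDerivAt_cosh u)).sub (Real.hasDerivAt_sinh u)
      refine this.congr_deriv ?_
      simp only [id_eq]; ring)
    (by simp)
    (fun u hu => mul_nonneg hu.le (Real.sinh_nonneg_iff.mpr hu.le)) ht
  simpa [sub_nonneg] using h

private lemma logcosh_le {t : ℝ} (ht : 0 ≤ t) :
    Real.log (Real.cosh t) ≤ t * Real.sinh (t / 2) / Real.cosh (t / 2) := by
  have hderiv : ∀ u : ℝ, HasDerivAt
      (fun w => w * Real.sinh (w / 2) / Real.cosh (w / 2) - Real.log (Real.cosh w))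
      (((1 * Real.sinh (u / 2) + u * (Real.cosh (u / 2) * (1 / 2))) * Real.cosh (u / 2)
          - u * Real.sinh (u / 2) * (Real.sinh (u / 2) * (1 / 2))) / Real.cosh (u / 2) ^ 2
        - Real.sinh u / Real.cosh u) u := by
    intro u
    have hinner : HasDerivAt (fun w : ℝ => w / 2) (1 / 2) u := by
      simpa using (hasDerivAt_id u).div_const 2
    have hs : HasDerivAt (fun w : ℝ => Real.sinh (w / 2)) (Real.cosh (u / 2) * (1 / 2)) u :=
      by have := (Real.hasDerivAt_sinh (u / 2)).comp u hinner; exact this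
    have hc : HasDerivAt (fun w : ℝ => Real.cosh (w / 2)) (Real.sinh (u / 2) * (1 / 2)) u :=
      by have := (Real.hasDerivAt_cosh (u / 2)).comp u hinner; exact this
    have hnum : HasDerivAt (fun w : ℝ => w * Real.sinh (w / 2))
        (1 * Real.sinh (u / 2) + u * (Real.cosh (u / 2) * (1 / 2))) u :=
      (hasDerivAt_id u).mul hs
    have hdiv := hnum.div hc (Real.cosh_pos (x := u / 2)).ne'
    have hlog := (Real.hasDerivAt_cosh u).log (Real.cosh_pos (x := u)).ne'
    exact hdiv.sub hlog
  have h := nonneg_of_deriv _ _ hderiv (by simp)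
    (fun u hu => by
      have hcpos : 0 < Real.cosh (u / 2) := Real.cosh_pos (u / 2)
      have hcu : 0 < Real.cosh u := Real.cosh_pos u
      have hcs : Real.cosh (u / 2) ^ 2 = Real.sinh (u / 2) ^ 2 + 1 := Real.cosh_sq (u / 2)
      have h2s : Real.sinh u = 2 * Real.sinh (u / 2) * Real.cosh (u / 2) := by
        rw [← Real.sinh_two_mul]; congr 1; ring
      have h2c : Real.cosh u = 2 * Real.cosh (u / 2) ^ 2 - 1 := by
        have h' : Real.cosh u = Real.cosh (u / 2) ^ 2 + Real.sinh (u / 2) ^ 2 := by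
          rw [← Real.cosh_two_mul]; congr 1; ring
        linarith
      have hL0 : Real.sinh u ≤ u * Real.cosh u := sinh_le_mul_cosh hu.le
      rw [sub_nonneg, div_le_div_iff₀ hcu (pow_pos hcpos 2)]
      rw [h2s, h2c] at hL0 ⊢
      have hzero : Real.cosh (u / 2) ^ 2 - Real.sinh (u / 2) ^ 2 - 1 = 0 := by linarith
      have expand : ((1 * Real.sinh (u / 2) + u * (Real.cosh (u / 2) * (1 / 2))) * Real.cosh (u / 2)
            - u * Real.sinh (u / 2) * (Real.sinh (u / 2) * (1 / 2))) * (2 * Real.cosh (u / 2) ^ 2 - 1)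
            - 2 * Real.sinh (u / 2) * Real.cosh (u / 2) * Real.cosh (u / 2) ^ 2
          = (u * (2 * Real.cosh (u / 2) ^ 2 - 1) - 2 * Real.sinh (u / 2) * Real.cosh (u / 2)) / 2
            + (u / 2) * (2 * Real.cosh (u / 2) ^ 2 - 1)
              * (Real.cosh (u / 2) ^ 2 - Real.sinh (u / 2) ^ 2 - 1) := by ring
      rw [hzero, mul_zero, add_zero] at expand
      linarith
    ) ht
  simpa [sub_nonneg] using h

private lemma lemA {t : ℝ} (ht : 0 < t) :
    Real.sinh t * Real.log (Real.cosh t) ≤ t * (Real.cosh t - 1) := by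
  have h := logcosh_le ht.le
  have hsn : 0 ≤ Real.sinh t := Real.sinh_nonneg_iff.mpr ht.le
  have h2 := mul_le_mul_of_nonneg_left h hsn
  have hcpos : (0:ℝ) < Real.cosh (t / 2) := Real.cosh_pos (t / 2)
  have h2s : Real.sinh t = 2 * Real.sinh (t / 2) * Real.cosh (t / 2) := by
    rw [← Real.sinh_two_mul]; congr 1; ring
  have h2c : Real.cosh t = 2 * Real.cosh (t / 2) ^ 2 - 1 := by
    have hcs : Real.cosh (t / 2) ^ 2 = Real.sinh (t / 2) ^ 2 + 1 := Real.cosh_sq (t / 2)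
    have h' : Real.cosh t = Real.cosh (t / 2) ^ 2 + Real.sinh (t / 2) ^ 2 := by
      rw [← Real.cosh_two_mul]; congr 1; ring
    linarith
  have heq : Real.sinh t * (t * Real.sinh (t / 2) / Real.cosh (t / 2))
      = t * (Real.cosh t - 1) := by
    have hcs : Real.cosh (t / 2) ^ 2 = Real.sinh (t / 2) ^ 2 + 1 := Real.cosh_sq (t / 2)
    rw [h2s, h2c]
    field_simp
    linear_combination (-2) * hcs
  linarith [h2, heq.le, heq.ge]

private lemma lemB {t : ℝ} (ht : 0 ≤ t) :
    t * Real.sinh t ≤ 2 * Real.cosh t * Real.log (Real.cosh t) := by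
  have hderiv : ∀ u : ℝ, HasDerivAt
      (fun w => Real.log (Real.cosh w) - w * Real.sinh w / (2 * Real.cosh w))
      (Real.sinh u / Real.cosh u -
        ((1 * Real.sinh u + u * Real.cosh u) * (2 * Real.cosh u)
          - u * Real.sinh u * (2 * Real.sinh u)) / (2 * Real.cosh u) ^ 2) u := by
    intro u
    have hnum : HasDerivAt (fun w : ℝ => w * Real.sinh w)
        (1 * Real.sinh u + u * Real.cosh u) u :=
      (hasDerivAt_id u).mul (Real.hasDerivAt_sinh u)
    have hden : HasDerivAt (fun w : ℝ => 2 * Real.cosh w) (2 * Real.sinh u) u :=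
      (Real.hasDerivAt_cosh u).const_mul 2
    have hdenne : 2 * Real.cosh u ≠ 0 := by positivity
    have hlog := (Real.hasDerivAt_cosh u).log (Real.cosh_pos (x := u)).ne'
    exact hlog.sub (hnum.div hden hdenne)
  have h := nonneg_of_deriv _ _ hderiv (by simp)
    (fun u hu => by
      have hcu : (0:ℝ) < Real.cosh u := Real.cosh_pos u
      have hcs : Real.cosh u ^ 2 = Real.sinh u ^ 2 + 1 := Real.cosh_sq u
      have hkey : u ≤ Real.sinh u * Real.cosh u := by
        have := Real.self_le_sinh_iff.mpr (by linarith : (0:ℝ) ≤ 2 * u)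
        rw [Real.sinh_two_mul] at this
        linarith
      rw [sub_nonneg, div_le_div_iff₀ (by positivity) hcu]
      have hzero : Real.cosh u ^ 2 - Real.sinh u ^ 2 - 1 = 0 := by linarith
      have expand : Real.sinh u * (2 * Real.cosh u) ^ 2
            - ((1 * Real.sinh u + u * Real.cosh u) * (2 * Real.cosh u)
              - u * Real.sinh u * (2 * Real.sinh u)) * Real.cosh u
          = 2 * Real.cosh u * (Real.sinh u * Real.cosh u - u)
            - 2 * u * Real.cosh u * (Real.cosh u ^ 2 - Real.sinh u ^ 2 - 1) := by ring
      rw [hzero, mul_zero, sub_zero] at expand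
      nlinarith [mul_nonneg hcu.le (by linarith : (0:ℝ) ≤ Real.sinh u * Real.cosh u - u)]
    ) ht
  have hcu : (0:ℝ) < Real.cosh t := Real.cosh_pos t
  have h' : t * Real.sinh t / (2 * Real.cosh t) ≤ Real.log (Real.cosh t) := by
    simpa [sub_nonneg] using h
  rw [div_le_iff₀ (by positivity)] at h'
  linarith

private lemma logMean_comm (x y : ℝ) : logMean x y = logMean y x := by
  unfold logMean
  rcases eq_or_ne x y with h | h
  · simp [h]
  · rw [if_neg h, if_neg (Ne.symm h)]
    rw [show x - y = -(y - x) from by ring, show Real.log x - Real.log y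
        = -(Real.log y - Real.log x) from by ring, neg_div_neg_eq]

private lemma lower_core {t s c L E : ℝ} (ht : 0 < t) (hs0 : 0 < s) (hc1 : 1 < c)
    (hL0 : 0 < L) (hcs : c ^ 2 = s ^ 2 + 1) (hE : E * (c + s) = 1)
    (hB : t * s ≤ 2 * c * L) : E * (t ^ 2 * (c - 1) ^ 2) ≤ s ^ 2 * c * L ^ 2 := by
  have hc0 : 0 < c := by linarith
  have hcspos : 0 < c + s := by linarith
  have hE0 : 0 < E := by nlinarith [hE, hcspos]
  have h1 : t ^ 2 * s ^ 2 ≤ 4 * c ^ 2 * L ^ 2 := by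
    nlinarith [hB, mul_pos ht hs0, mul_pos hc0 hL0]
  have h2 : 4 * c ≤ (c + s) * (c + 1) ^ 2 := by
    nlinarith [mul_nonneg hs0.le (sq_nonneg (c + 1)), mul_nonneg hc0.le (sq_nonneg (c - 1))]
  have e1 : (c - 1) ^ 2 * (c + 1) ^ 2 = s ^ 2 * s ^ 2 := by
    linear_combination (c ^ 2 - 1 + s ^ 2) * hcs
  have h3 : t ^ 2 * (c - 1) ^ 2 * s ^ 2 ≤ (c + s) * (s ^ 2 * c * L ^ 2) * s ^ 2 := by
    calc t ^ 2 * (c - 1) ^ 2 * s ^ 2 = t ^ 2 * s ^ 2 * (c - 1) ^ 2 := by ring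
      _ ≤ 4 * c ^ 2 * L ^ 2 * (c - 1) ^ 2 := mul_le_mul_of_nonneg_right h1 (sq_nonneg _)
      _ = c * L ^ 2 * (c - 1) ^ 2 * (4 * c) := by ring
      _ ≤ c * L ^ 2 * (c - 1) ^ 2 * ((c + s) * (c + 1) ^ 2) :=
          mul_le_mul_of_nonneg_left h2 (by positivity)
      _ = (c + s) * (s ^ 2 * c * L ^ 2) * s ^ 2 := by
          linear_combination c * L ^ 2 * (c + s) * e1
  have key : t ^ 2 * (c - 1) ^ 2 ≤ (c + s) * (s ^ 2 * c * L ^ 2) :=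
    (mul_le_mul_iff_left₀ (by positivity : (0:ℝ) < s ^ 2)).mp h3
  calc E * (t ^ 2 * (c - 1) ^ 2) ≤ E * ((c + s) * (s ^ 2 * c * L ^ 2)) :=
        mul_le_mul_of_nonneg_left key hE0.le
    _ = s ^ 2 * c * L ^ 2 := by linear_combination (s ^ 2 * c * L ^ 2) * hE

private lemma upper_core {t s c L : ℝ} (ht : 0 < t) (hs0 : 0 < s) (hc1 : 1 < c)
    (hL0 : 0 < L) (hA' : s * L ≤ t * (c - 1)) :
    s ^ 2 * c * L ^ 2 ≤ (c + s) * (t ^ 2 * (c - 1) ^ 2) := by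
  have hc0 : 0 < c := by linarith
  have hA2 : s ^ 2 * L ^ 2 ≤ t ^ 2 * (c - 1) ^ 2 := by
    nlinarith [hA', mul_pos hs0 hL0, mul_pos ht (by linarith : (0:ℝ) < c - 1)]
  nlinarith [mul_le_mul_of_nonneg_left hA2 hc0.le,
    mul_nonneg hs0.le (mul_nonneg (sq_nonneg t) (sq_nonneg (c - 1)))]

private lemma main_lemma {x y : ℝ} (hy : 0 < y) (hxy : y < x) :
    min x y ≤ (logMean x y /
        logMean (((x + y) / 2) ^ ((1 : ℝ) / 2)) ((2 * x * y / (x + y)) ^ ((1 : ℝ) / 2))) ^ 2 ∧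
      (logMean x y /
        logMean (((x + y) / 2) ^ ((1 : ℝ) / 2)) ((2 * x * y / (x + y)) ^ ((1 : ℝ) / 2))) ^ 2
        ≤ max x y := by
  have hx : 0 < x := hy.trans hxy
  set t : ℝ := (Real.log x - Real.log y) / 2 with htdef
  have ht : 0 < t := by
    have := Real.log_lt_log hy hxy
    rw [htdef]; linarith
  set g : ℝ := Real.sqrt (x * y) with hgdef
  have hg : 0 < g := Real.sqrt_pos.mpr (by positivity)
  have hex : Real.exp (Real.log x / 2) = Real.sqrt x := by
    rw [← Real.log_sqrt hx.le, Real.exp_log (Real.sqrt_pos.mpr hx)]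
  have hey : Real.exp (Real.log y / 2) = Real.sqrt y := by
    rw [← Real.log_sqrt hy.le, Real.exp_log (Real.sqrt_pos.mpr hy)]
  have hsqx : 0 < Real.sqrt x := Real.sqrt_pos.mpr hx
  have hsqy : 0 < Real.sqrt y := Real.sqrt_pos.mpr hy
  have hexpt : Real.exp t = Real.sqrt x / Real.sqrt y := by
    rw [htdef, sub_div, Real.exp_sub, hex, hey]
  have hexpnt : Real.exp (-t) = Real.sqrt y / Real.sqrt x := by
    rw [Real.exp_neg, hexpt, inv_div]
  have hgx : x = g * Real.exp t := by
    rw [hexpt, hgdef, Real.sqrt_mul hx.le]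
    field_simp
    linear_combination (-1) * (Real.sq_sqrt hx.le)
  have hgy : y = g * Real.exp (-t) := by
    rw [hexpnt, hgdef, Real.sqrt_mul hx.le]
    field_simp
    linear_combination (-1) * (Real.sq_sqrt hy.le)
  clear_value t g
  set c : ℝ := Real.cosh t with hcdef
  set s : ℝ := Real.sinh t with hsdef
  set L : ℝ := Real.log c with hLdef
  have hc1 : 1 < c := Real.one_lt_cosh.mpr ht.ne'
  have hc0 : 0 < c := by linarith
  have hs0 : 0 < s := Real.sinh_pos_iff.mpr ht
  have hcs : c ^ 2 = s ^ 2 + 1 := Real.cosh_sq t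
  have hexpcs : Real.exp t = c + s := by rw [hcdef, hsdef, Real.cosh_add_sinh]
  have hexpn : Real.exp (-t) * (c + s) = 1 := by
    rw [← hexpcs, ← Real.exp_add]; simp
  have hL0 : 0 < L := Real.log_pos hc1
  have hB : t * s ≤ 2 * c * L := by
    rw [hsdef, hLdef, hcdef]; exact lemB ht.le
  have hA' : s * L ≤ t * (c - 1) := by
    rw [hsdef, hLdef, hcdef]; exact lemA ht
  clear_value c s L
  have hxpy : x + y = 2 * (g * c) := by
    rw [hgx, hgy, hcdef, Real.cosh_eq]; ring
  have hxmy : x - y = 2 * (g * s) := by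
    rw [hgx, hgy, hsdef, Real.sinh_eq]; ring
  have hlxy : Real.log x - Real.log y = 2 * t := by rw [htdef]; ring
  have hxy2 : x * y = g ^ 2 := by
    have he : Real.exp t * Real.exp (-t) = 1 := by rw [← Real.exp_add]; simp
    rw [hgx, hgy]
    linear_combination g ^ 2 * he
  have hA : (x + y) / 2 = g * c := by linarith
  have hH : 2 * x * y / (x + y) = g / c := by
    rw [mul_assoc, hxy2, hxpy, div_eq_div_iff (by positivity) hc0.ne']
    ring
  have hLM : logMean x y = g * s / t := by
    rw [logMean, if_neg (by exact fun h => absurd h hxy.ne'), hxmy, hlxy,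
      mul_div_mul_left _ _ (two_ne_zero)]
  have hlt : g / c < g * c := by
    rw [div_lt_iff₀ hc0]
    nlinarith
  have hne : Real.sqrt (g * c) ≠ Real.sqrt (g / c) :=
    (Real.sqrt_lt_sqrt (by positivity) hlt).ne'
  have hLM' : logMean (Real.sqrt (g * c)) (Real.sqrt (g / c))
      = (Real.sqrt g * Real.sqrt c - Real.sqrt g / Real.sqrt c) / L := by
    rw [logMean, if_neg hne, Real.log_sqrt (by positivity), Real.log_sqrt (by positivity),
      Real.log_mul hg.ne' hc0.ne', Real.log_div hg.ne' hc0.ne',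
      Real.sqrt_mul hg.le, Real.sqrt_div hg.le]
    rw [show (Real.log g + Real.log c) / 2 - (Real.log g - Real.log c) / 2 = L from by
      rw [hLdef]; ring]
  have hsqg : Real.sqrt g ^ 2 = g := Real.sq_sqrt hg.le
  have hsqc : Real.sqrt c ^ 2 = c := Real.sq_sqrt hc0.le
  have hsqg0 : 0 < Real.sqrt g := Real.sqrt_pos.mpr hg
  have hsqc0 : 0 < Real.sqrt c := Real.sqrt_pos.mpr hc0
  have hval : (g * s / t / ((Real.sqrt g * Real.sqrt c - Real.sqrt g / Real.sqrt c) / L)) ^ 2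
      = g * (s ^ 2 * c * L ^ 2) / (t ^ 2 * (c - 1) ^ 2) := by
    have h1 : Real.sqrt g * Real.sqrt c - Real.sqrt g / Real.sqrt c
        = Real.sqrt g * (c - 1) / Real.sqrt c := by
      field_simp
      linear_combination hsqc
    rw [h1]
    have hc1' : c - 1 ≠ 0 := ne_of_gt (by linarith)
    have ht' : t ≠ 0 := ht.ne'
    have hL' : L ≠ 0 := hL0.ne'
    have h2 : g * s / t / (Real.sqrt g * (c - 1) / Real.sqrt c / L)
        = Real.sqrt g * (s * Real.sqrt c * L) / (t * (c - 1)) := by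
      field_simp [ht', hc1', hL', hsqg0.ne', hsqc0.ne']
      linear_combination (-1) * hsqg
    rw [h2]
    simp only [div_pow, mul_pow, hsqg, hsqc]
    try ring
  rw [hA, hH, ← Real.sqrt_eq_rpow, ← Real.sqrt_eq_rpow, hLM, hLM', hval,
    min_eq_right hxy.le, max_eq_left hxy.le, hgx, hgy]
  have hden : 0 < t ^ 2 * (c - 1) ^ 2 :=
    mul_pos (pow_pos ht 2) (pow_pos (by linarith : (0:ℝ) < c - 1) 2)
  constructor
  · rw [le_div_iff₀ hden]
    have hcore := lower_core ht hs0 hc1 hL0 hcs hexpn hB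
    calc g * Real.exp (-t) * (t ^ 2 * (c - 1) ^ 2)
        = g * (Real.exp (-t) * (t ^ 2 * (c - 1) ^ 2)) := by ring
      _ ≤ g * (s ^ 2 * c * L ^ 2) := mul_le_mul_of_nonneg_left hcore hg.le
  · rw [div_le_iff₀ hden, hexpcs]
    have hcore := upper_core ht hs0 hc1 hL0 hA'
    calc g * (s ^ 2 * c * L ^ 2)
        ≤ g * ((c + s) * (t ^ 2 * (c - 1) ^ 2)) := mul_le_mul_of_nonneg_left hcore hg.le
      _ = g * (c + s) * (t ^ 2 * (c - 1) ^ 2) := by ring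

theorem L_AH_half_is_mean (x y : ℝ) (hx : 0 < x) (hy : 0 < y) :
    min x y ≤ (logMean x y /
        logMean (((x + y) / 2) ^ ((1 : ℝ) / 2)) ((2 * x * y / (x + y)) ^ ((1 : ℝ) / 2))) ^ 2 ∧
      (logMean x y /
        logMean (((x + y) / 2) ^ ((1 : ℝ) / 2)) ((2 * x * y / (x + y)) ^ ((1 : ℝ) / 2))) ^ 2
        ≤ max x y := by
  rcases lt_trichotomy x y with h | h | h
  · have := main_lemma hx h
    rw [logMean_comm y x, min_comm y x, max_comm y x, add_comm y x,
      show 2 * y * x = 2 * x * y from by ring] at this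
    exact this
  · subst h
    have hxx : (x + x) / 2 = x := by ring
    have hxx2 : 2 * x * x / (x + x) = x := by
      rw [div_eq_iff (by positivity : x + x ≠ 0)]; ring
    rw [hxx, hxx2]
    have h1 : logMean x x = x := by rw [logMean, if_pos rfl]
    have h2 : logMean (x ^ ((1:ℝ)/2)) (x ^ ((1:ℝ)/2)) = x ^ ((1:ℝ)/2) := by
      rw [logMean, if_pos rfl]
    rw [h1, h2, ← Real.sqrt_eq_rpow]
    have hsq : Real.sqrt x ^ 2 = x := Real.sq_sqrt hx.le
    have hsq0 : 0 < Real.sqrt x := Real.sqrt_pos.mpr hx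
    have : (x / Real.sqrt x) ^ 2 = x := by
      rw [div_pow, hsq]
      field_simp
    rw [this]
    simp
  · exact main_lemma hy h
end

section
/- Let M be a symmetric, homogeneous, monotone (nondecreasing) mean on ℝ₊² and let C, D be arbitrary means on ℝ₊². For t ∈ (0,1), define N_t(x,y) = (M(x,y)/M(C(x,y)^t, D(x,y)^t))^{1/(1-t)}. Then K_t = C^t·N_t^{1-t} and L_t = D^t·N_t^{1-t} are means and satisfy M(K_t(x,y), L_t(x,y)) = M(x,y) for all x, y > 0. -/
private lemma core_ineq (a b t : ℝ) (ha : 0 < a) (hab : a ≤ b) (ht0 : 0 < t) (ht1 : t < 1) :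
    a * b ^ t ≤ a ^ t * b := by
  have hb : 0 < b := lt_of_lt_of_le ha hab
  have h1 : a ^ (1 - t) ≤ b ^ (1 - t) := Real.rpow_le_rpow ha.le hab (by linarith)
  have h2 := mul_le_mul_of_nonneg_right h1
    (mul_nonneg (Real.rpow_nonneg ha.le t) (Real.rpow_nonneg hb.le t))
  calc a * b ^ t = a ^ (1 - t) * a ^ t * b ^ t := by
        rw [← Real.rpow_add ha]; norm_num
    _ = a ^ (1 - t) * (a ^ t * b ^ t) := by ring
    _ ≤ b ^ (1 - t) * (a ^ t * b ^ t) := h2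
    _ = a ^ t * (b ^ (1 - t) * b ^ t) := by ring
    _ = a ^ t * b := by rw [← Real.rpow_add hb]; norm_num

private lemma sandwich (M : ℝ → ℝ → ℝ)
    (hsym : ∀ x y : ℝ, 0 < x → 0 < y → M x y = M y x)
    (hhom : ∀ l x y : ℝ, 0 < l → 0 < x → 0 < y → M (l * x) (l * y) = l * M x y)
    (hmono : ∀ x₁ y₁ x₂ y₂ : ℝ, 0 < x₁ → 0 < y₁ → x₁ ≤ x₂ → y₁ ≤ y₂ → M x₁ y₁ ≤ M x₂ y₂)
    (t a b c d : ℝ) (ht0 : 0 < t) (ht1 : t < 1) (ha : 0 < a) (hab : a ≤ b)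
    (hca : a ≤ c) (hcb : c ≤ b) (hda : a ≤ d) (hdb : d ≤ b) :
    a * M (c ^ t) (d ^ t) ≤ c ^ t * M a b ∧ c ^ t * M a b ≤ b * M (c ^ t) (d ^ t) := by
  have hb : 0 < b := lt_of_lt_of_le ha hab
  have hc0 : 0 < c := lt_of_lt_of_le ha hca
  have hd0 : 0 < d := lt_of_lt_of_le ha hda
  have hat : 0 < a ^ t := Real.rpow_pos_of_pos ha t
  have hbt : 0 < b ^ t := Real.rpow_pos_of_pos hb t
  have hct : 0 < c ^ t := Real.rpow_pos_of_pos hc0 t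
  have hdt : 0 < d ^ t := Real.rpow_pos_of_pos hd0 t
  have core := core_ineq a b t ha hab ht0 ht1
  have key1 : a * d ^ t ≤ c ^ t * b := by
    calc a * d ^ t ≤ a * b ^ t :=
          mul_le_mul_of_nonneg_left (Real.rpow_le_rpow hd0.le hdb ht0.le) ha.le
      _ ≤ a ^ t * b := core
      _ ≤ c ^ t * b :=
          mul_le_mul_of_nonneg_right (Real.rpow_le_rpow ha.le hca ht0.le) hb.le
  have key2 : c ^ t * a ≤ b * d ^ t := by
    calc c ^ t * a ≤ b ^ t * a :=
          mul_le_mul_of_nonneg_right (Real.rpow_le_rpow hc0.le hcb ht0.le) ha.le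
      _ = a * b ^ t := mul_comm _ _
      _ ≤ a ^ t * b := core
      _ ≤ d ^ t * b :=
          mul_le_mul_of_nonneg_right (Real.rpow_le_rpow ha.le hda ht0.le) hb.le
      _ = b * d ^ t := mul_comm _ _
  constructor
  · calc a * M (c ^ t) (d ^ t) = M (a * c ^ t) (a * d ^ t) := (hhom a _ _ ha hct hdt).symm
      _ = M (a * d ^ t) (a * c ^ t) := hsym _ _ (by positivity) (by positivity)
      _ ≤ M (c ^ t * b) (c ^ t * a) :=
          hmono _ _ _ _ (by positivity) (by positivity) key1 (le_of_eq (mul_comm _ _))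
      _ = M (c ^ t * a) (c ^ t * b) := hsym _ _ (by positivity) (by positivity)
      _ = c ^ t * M a b := hhom _ _ _ hct ha hb
  · calc c ^ t * M a b = M (c ^ t * a) (c ^ t * b) := (hhom _ _ _ hct ha hb).symm
      _ ≤ M (b * d ^ t) (b * c ^ t) :=
          hmono _ _ _ _ (by positivity) (by positivity) key2 (le_of_eq (mul_comm _ _))
      _ = M (b * c ^ t) (b * d ^ t) := hsym _ _ (by positivity) (by positivity)
      _ = b * M (c ^ t) (d ^ t) := hhom _ _ _ hb hct hdt

theorem main_invariance (M C D : ℝ → ℝ → ℝ)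
    (hM : ∀ x y : ℝ, 0 < x → 0 < y → min x y ≤ M x y ∧ M x y ≤ max x y)
    (hsym : ∀ x y : ℝ, 0 < x → 0 < y → M x y = M y x)
    (hhom : ∀ l x y : ℝ, 0 < l → 0 < x → 0 < y → M (l * x) (l * y) = l * M x y)
    (hmono : ∀ x₁ y₁ x₂ y₂ : ℝ, 0 < x₁ → 0 < y₁ → x₁ ≤ x₂ → y₁ ≤ y₂ → M x₁ y₁ ≤ M x₂ y₂)
    (hC : ∀ x y : ℝ, 0 < x → 0 < y → min x y ≤ C x y ∧ C x y ≤ max x y)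
    (hD : ∀ x y : ℝ, 0 < x → 0 < y → min x y ≤ D x y ∧ D x y ≤ max x y)
    (t : ℝ) (ht : t ∈ Set.Ioo (0 : ℝ) 1)
    (N K L : ℝ → ℝ → ℝ)
    (hN : ∀ x y : ℝ, N x y = (M x y / M ((C x y) ^ t) ((D x y) ^ t)) ^ (1 / (1 - t)))
    (hK : ∀ x y : ℝ, K x y = (C x y) ^ t * (N x y) ^ (1 - t))
    (hL : ∀ x y : ℝ, L x y = (D x y) ^ t * (N x y) ^ (1 - t)) :
    (∀ x y : ℝ, 0 < x → 0 < y →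
        min x y ≤ K x y ∧ K x y ≤ max x y ∧ min x y ≤ L x y ∧ L x y ≤ max x y) ∧
    (∀ x y : ℝ, 0 < x → 0 < y → M (K x y) (L x y) = M x y) := by
  obtain ⟨ht0, ht1⟩ := ht
  have h1t : 0 < 1 - t := by linarith
  have main : ∀ x y : ℝ, 0 < x → 0 < y →
      (min x y ≤ K x y ∧ K x y ≤ max x y ∧ min x y ≤ L x y ∧ L x y ≤ max x y) ∧
      M (K x y) (L x y) = M x y := by
    intro x y hx hy
    set a := min x y with hadef
    set b := max x y with hbdef
    have ha : 0 < a := lt_min hx hy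
    have hab : a ≤ b := min_le_max
    have hb : 0 < b := lt_of_lt_of_le ha hab
    have hmab : M x y = M a b := by
      rcases le_total x y with h | h
      · rw [hadef, hbdef, min_eq_left h, max_eq_right h]
      · rw [hsym x y hx hy, hadef, hbdef, min_eq_right h, max_eq_left h]
    set c := C x y with hcdef
    set d := D x y with hddef
    obtain ⟨hca, hcb⟩ := hC x y hx hy
    obtain ⟨hda, hdb⟩ := hD x y hx hy
    have hc0 : 0 < c := lt_of_lt_of_le ha hca
    have hd0 : 0 < d := lt_of_lt_of_le ha hda
    have hct : 0 < c ^ t := Real.rpow_pos_of_pos hc0 t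
    have hdt : 0 < d ^ t := Real.rpow_pos_of_pos hd0 t
    set E := M (c ^ t) (d ^ t) with hEdef
    have hE : 0 < E := lt_of_lt_of_le (lt_min hct hdt) (hM _ _ hct hdt).1
    have hm : 0 < M x y := by
      rw [hmab]
      exact lt_of_lt_of_le (lt_min ha hb) (hM a b ha hb).1
    have hNt : N x y ^ (1 - t) = M x y / E := by
      rw [hN x y, ← hcdef, ← hddef, ← hEdef, ← Real.rpow_mul (div_nonneg hm.le hE.le),
        one_div, inv_mul_cancel₀ (ne_of_gt h1t), Real.rpow_one]
    have hKeq : K x y = c ^ t * (M x y / E) := by rw [hK x y, hNt]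
    have hLeq : L x y = d ^ t * (M x y / E) := by rw [hL x y, hNt]
    have hS1 := sandwich M hsym hhom hmono t a b c d ht0 ht1 ha hab hca hcb hda hdb
    have hS2 := sandwich M hsym hhom hmono t a b d c ht0 ht1 ha hab hda hdb hca hcb
    have hEsym : M (d ^ t) (c ^ t) = E := hsym _ _ hdt hct
    rw [hEsym] at hS2
    refine ⟨⟨?_, ?_, ?_, ?_⟩, ?_⟩
    · rw [hKeq, ← mul_div_assoc, le_div_iff₀ hE, hmab]
      exact hS1.1
    · rw [hKeq, ← mul_div_assoc, div_le_iff₀ hE, hmab]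
      exact hS1.2
    · rw [hLeq, ← mul_div_assoc, le_div_iff₀ hE, hmab]
      exact hS2.1
    · rw [hLeq, ← mul_div_assoc, div_le_iff₀ hE, hmab]
      exact hS2.2
    · have hq : 0 < M x y / E := div_pos hm hE
      rw [hKeq, hLeq, mul_comm (c ^ t), mul_comm (d ^ t), hhom _ _ _ hq hct hdt,
        div_mul_cancel₀ _ (ne_of_gt hE)]
  exact ⟨fun x y hx hy => (main x y hx hy).1, fun x y hx hy => (main x y hx hy).2⟩
end

section
/- Let N : ℝ² → ℝ be a monotone, translative, symmetric mean and, for t ∈ (-1,1), define N_t(x,y) = (N(x,y) - N(tx,ty))/(1-t). Then K_t(x,y) = t·x + (1-t)·N_t(x,y) and L_t(x,y) = t·y + (1-t)·N_t(x,y) are translative means satisfying N(K_t(x,y), L_t(x,y)) = N(x,y) for all x, y ∈ ℝ. -/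
theorem translative_invariance (N : ℝ → ℝ → ℝ)
    (hmean : ∀ x y : ℝ, min x y ≤ N x y ∧ N x y ≤ max x y)
    (htrans : ∀ τ x y : ℝ, N (x + τ) (y + τ) = N x y + τ)
    (hsym : ∀ x y : ℝ, N x y = N y x)
    (hmono : ∀ x₁ y₁ x₂ y₂ : ℝ, x₁ ≤ x₂ → y₁ ≤ y₂ → N x₁ y₁ ≤ N x₂ y₂)
    (t : ℝ) (ht : t ∈ Set.Ioo (-1 : ℝ) 1)
    (Nt K L : ℝ → ℝ → ℝ)
    (hNt : ∀ x y : ℝ, Nt x y = (N x y - N (t * x) (t * y)) / (1 - t))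
    (hK : ∀ x y : ℝ, K x y = t * x + (1 - t) * Nt x y)
    (hL : ∀ x y : ℝ, L x y = t * y + (1 - t) * Nt x y) :
    (∀ x y : ℝ, min x y ≤ K x y ∧ K x y ≤ max x y ∧ min x y ≤ L x y ∧ L x y ≤ max x y) ∧
    (∀ τ x y : ℝ, K (x + τ) (y + τ) = K x y + τ ∧ L (x + τ) (y + τ) = L x y + τ) ∧
    (∀ x y : ℝ, N (K x y) (L x y) = N x y) := by
  obtain ⟨ht1, ht2⟩ := ht
  have h1t : (0:ℝ) < 1 - t := by linarith
  -- simplified formula for K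
  have hKc : ∀ x y : ℝ, K x y = t * x + (N x y - N (t * x) (t * y)) := by
    intro x y
    rw [hK, hNt]
    field_simp
  have hLc : ∀ x y : ℝ, L x y = t * y + (N x y - N (t * x) (t * y)) := by
    intro x y
    rw [hL, hNt]
    field_simp
  -- key identity: N (t x) (t y) = (t-1) x + N x (x + t (y - x))
  have hkey : ∀ x y : ℝ, N (t * x) (t * y) = (t - 1) * x + N x (x + t * (y - x)) := by
    intro x y
    have := htrans ((t - 1) * x) x (x + t * (y - x))
    have e1 : x + (t - 1) * x = t * x := by ring
    have e2 : x + t * (y - x) + (t - 1) * x = t * y := by ring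
    rw [e1, e2] at this
    linarith [this]
  have hKf : ∀ x y : ℝ, K x y = x + N x y - N x (x + t * (y - x)) := by
    intro x y
    rw [hKc, hkey]
    ring
  -- L x y = K y x
  have hLK : ∀ x y : ℝ, L x y = K y x := by
    intro x y
    rw [hLc, hKc, hsym x y, hsym (t*x) (t*y)]
  -- bounds for K
  have hKlow : ∀ x y : ℝ, min x y ≤ K x y := by
    intro x y
    rw [hKf]
    rcases le_total x y with h | h
    · rw [min_eq_left h]
      have hm : N x (x + t * (y - x)) ≤ N x y :=
        hmono x (x + t * (y - x)) x y le_rfl (by nlinarith)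
      linarith
    · rw [min_eq_right h]
      have e := htrans (x - y) x y
      have e1 : x + (x - y) = 2 * x - y := by ring
      have e2 : y + (x - y) = x := by ring
      rw [e1, e2] at e
      have hm : N (x + t * (y - x)) x ≤ N (2 * x - y) x :=
        hmono _ _ _ _ (by nlinarith) le_rfl
      rw [hsym x (x + t * (y - x))]
      linarith
  have hKhigh : ∀ x y : ℝ, K x y ≤ max x y := by
    intro x y
    rw [hKf]
    rcases le_total x y with h | h
    · rw [max_eq_right h]
      have e := htrans (y - x) x (x + t * (y - x))
      have e1 : x + (y - x) = y := by ring
      have e2 : x + t * (y - x) + (y - x) = y + t * (y - x) := by ring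
      rw [e1, e2] at e
      have hm : N y x ≤ N y (y + t * (y - x)) :=
        hmono _ _ _ _ le_rfl (by nlinarith)
      rw [hsym x y]
      linarith
    · rw [max_eq_left h]
      have hm : N x y ≤ N x (x + t * (y - x)) :=
        hmono _ _ _ _ le_rfl (by nlinarith)
      linarith
  refine ⟨?_, ?_, ?_⟩
  · intro x y
    refine ⟨hKlow x y, hKhigh x y, ?_, ?_⟩
    · rw [hLK, min_comm]; exact hKlow y x
    · rw [hLK, max_comm]; exact hKhigh y x
  · intro τ x y
    have e := htrans (t * τ) (t * x) (t * y)
    have e1 : t * x + t * τ = t * (x + τ) := by ring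
    have e2 : t * y + t * τ = t * (y + τ) := by ring
    rw [e1, e2] at e
    constructor
    · rw [hKc, hKc, htrans τ x y, e]; ring
    · rw [hLc, hLc, htrans τ x y, e]; ring
  · intro x y
    have e := htrans (N x y - N (t * x) (t * y)) (t * x) (t * y)
    rw [← hKc, ← hLc] at e
    rw [e]; ring
end
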